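/- arXiv:math-ph/0303047 — 4 statements merged into one kernel-verified Lean document; each statement's English description precedes it below -/
import Mathlib

section
/- Let (Ω, ℱ, ℙ) be a probability space and let (θ_k)_{k∈ℤ} and (α_k)_{k∈ℤ} be random variables with values in the additive circle 𝕋 = ℝ/2πℤ such that the combined family {θ_k : k∈ℤ} ∪ {α_k : k∈ℤ} is mutually independent, the θ_k are identically distributed with the uniform (normalized Haar) distribution on 𝕋, and the α_k are identically distributed (with arbitrary common distribution). Then the random variables η_k := θ_k + θ_{k−1} + α_k − α_{k−1}, k ∈ ℤ, form an independent family and each η_k is uniformly distributed on 𝕋. -/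
open MeasureTheory ProbabilityTheory

noncomputable instance : Fact (0 < 2 * Real.pi) := ⟨by positivity⟩

/-- The uniform (normalized Haar) probability measure on the additive circle `ℝ/2πℤ`. -/
noncomputable def uniformCircle : Measure (AddCircle (2 * Real.pi)) :=
  (ENNReal.ofReal (2 * Real.pi))⁻¹ • (volume : Measure (AddCircle (2 * Real.pi)))

instance : IsProbabilityMeasure uniformCircle := by
  constructor
  rw [uniformCircle, Measure.smul_apply, AddCircle.measure_univ, smul_eq_mul,
    ENNReal.inv_mul_cancel] <;> simp [Real.pi_pos, ne_of_gt, ENNReal.mul_eq_top]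

lemma uniformCircle_preimage_add (c : AddCircle (2 * Real.pi))
    (A : Set (AddCircle (2 * Real.pi))) :
    uniformCircle ((fun x => x + c) ⁻¹' A) = uniformCircle A := by
  have h : (fun x : AddCircle (2 * Real.pi) => x + c) = (fun x => c + x) := by
    funext x; exact add_comm x c
  rw [uniformCircle, Measure.smul_apply, Measure.smul_apply, h,
    measure_preimage_add]

lemma key_cond {Ω E : Type*} [MeasureSpace Ω] [IsProbabilityMeasure (ℙ : Measure Ω)]
    [MeasurableSpace E]
    {X : Ω → AddCircle (2 * Real.pi)} {Y : Ω → E}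
    (hX : Measurable X) (hY : Measurable Y)
    (hXunif : Measure.map X ℙ = uniformCircle)
    (hXY : IndepFun X Y ℙ)
    {g : E → AddCircle (2 * Real.pi)} (hg : Measurable g)
    {A : Set (AddCircle (2 * Real.pi))} (hA : MeasurableSet A)
    {B : Set E} (hB : MeasurableSet B) :
    ℙ {ω | X ω + g (Y ω) ∈ A ∧ Y ω ∈ B} = uniformCircle A * ℙ (Y ⁻¹' B) := by
  have hmap : Measure.map (fun ω => (X ω, Y ω)) ℙ = uniformCircle.prod (Measure.map Y ℙ) := by
    rw [← hXunif]
    exact (indepFun_iff_map_prod_eq_prod_map_map hX.aemeasurable hY.aemeasurable).mp hXY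
  have hC : MeasurableSet {p : AddCircle (2 * Real.pi) × E | p.1 + g p.2 ∈ A ∧ p.2 ∈ B} := by
    refine MeasurableSet.inter ?_ (measurable_snd hB)
    exact (measurable_fst.add (hg.comp measurable_snd)) hA
  have hset : {ω | X ω + g (Y ω) ∈ A ∧ Y ω ∈ B}
      = (fun ω => (X ω, Y ω)) ⁻¹' {p | p.1 + g p.2 ∈ A ∧ p.2 ∈ B} := rfl
  rw [hset, ← Measure.map_apply (hX.prodMk hY) hC, hmap, Measure.prod_apply_symm hC]
  have hslice : ∀ y : E,
      uniformCircle ((fun x => (x, y)) ⁻¹' {p : AddCircle (2 * Real.pi) × E | p.1 + g p.2 ∈ A ∧ p.2 ∈ B})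
        = B.indicator (fun _ => uniformCircle A) y := by
    intro y
    by_cases hy : y ∈ B
    · have : ((fun x => (x, y)) ⁻¹' {p : AddCircle (2 * Real.pi) × E | p.1 + g p.2 ∈ A ∧ p.2 ∈ B})
          = (fun x => x + g y) ⁻¹' A := by
        ext x; simp [hy]
      rw [this, uniformCircle_preimage_add, Set.indicator_of_mem hy]
    · have : ((fun x => (x, y)) ⁻¹' {p : AddCircle (2 * Real.pi) × E | p.1 + g p.2 ∈ A ∧ p.2 ∈ B})
          = ∅ := by
        ext x; simp [hy]
      rw [this, Set.indicator_of_notMem hy]; simp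
  rw [lintegral_congr hslice, lintegral_indicator hB, setLIntegral_const,
    Measure.map_apply hY hB]

lemma eta_finset_measure {Ω : Type*} [MeasureSpace Ω] [IsProbabilityMeasure (ℙ : Measure Ω)]
    (θ α : ℤ → Ω → AddCircle (2 * Real.pi))
    (hθmeas : ∀ k, Measurable (θ k)) (hαmeas : ∀ k, Measurable (α k))
    (hindep : iIndepFun (Sum.elim θ α) ℙ)
    (hθunif : ∀ k, Measure.map (θ k) ℙ = uniformCircle)
    (S : Finset ℤ) :
    ∀ (E : ℤ → Set (AddCircle (2 * Real.pi))), (∀ k ∈ S, MeasurableSet (E k)) →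
      ℙ (⋂ k ∈ S, (fun ω => θ k ω + θ (k - 1) ω + α k ω - α (k - 1) ω) ⁻¹' E k)
        = ∏ k ∈ S, uniformCircle (E k) := by
  classical
  induction S using Finset.induction_on_max with
  | empty => intro E hE; simp
  | insert a s hmax ih =>
    intro E hE
    have has : a ∉ s := fun h => lt_irrefl a (hmax a h)
    set F : ℤ ⊕ ℤ → Ω → AddCircle (2 * Real.pi) := Sum.elim θ α with hF
    have hFmeas : ∀ i, Measurable (F i) := by rintro (i | i) <;> [exact hθmeas i; exact hαmeas i]
    set I : Finset ℤ := insert (a - 1) (s ∪ s.image (· - 1)) with hI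
    set J : Finset ℤ := insert a I with hJ
    set T : Finset (ℤ ⊕ ℤ) := I.image Sum.inl ∪ J.image Sum.inr with hT
    have haT : Sum.inl a ∉ T := by
      simp only [hT, Finset.mem_union, Finset.mem_image, hI, Finset.mem_insert]
      rintro ((⟨k, hk, hke⟩) | (⟨k, hk, hke⟩))
      · injection hke with h1
        rcases hk with h2 | h2 | h2
        · omega
        · exact absurd (h1 ▸ hmax k h2) (lt_irrefl a)
        · obtain ⟨m, hm, hme⟩ := h2
          have := hmax m hm; omega
      · exact Sum.inr_ne_inl hke
    -- membership helpers
    have hmemI : ∀ k ∈ s, k ∈ I := fun k hk => by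
      simp [hI, Finset.mem_insert, Finset.mem_union, hk]
    have hmemI' : ∀ k, k ∈ s → k - 1 ∈ I := fun k hk => by
      simp only [hI, Finset.mem_insert, Finset.mem_union, Finset.mem_image]
      right; right; exact ⟨k, hk, rfl⟩
    have ha1I : a - 1 ∈ I := Finset.mem_insert_self _ _
    have haJ : a ∈ J := Finset.mem_insert_self _ _
    have hIJ : ∀ k ∈ I, k ∈ J := fun k hk => Finset.mem_insert_of_mem hk
    -- the tuple Y of all variables with index in T
    set Y : Ω → ((i : T) → AddCircle (2 * Real.pi)) := fun ω i => F i ω with hY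
    have hYmeas : Measurable Y := measurable_pi_lambda _ fun i => hFmeas i
    -- coordinate evaluation with default
    set e : (ℤ ⊕ ℤ) → ((i : T) → AddCircle (2 * Real.pi)) → AddCircle (2 * Real.pi) :=
      fun i y => if h : i ∈ T then y ⟨i, h⟩ else 0 with he
    have hemeas : ∀ i, Measurable (e i) := by
      intro i
      by_cases h : i ∈ T
      · simpa [he, h] using measurable_pi_apply (⟨i, h⟩ : T)
      · simp only [he, h, dif_neg, not_false_iff]; exact measurable_const
    have heY : ∀ i (_ : i ∈ T) ω, e i (Y ω) = F i ω := by
      intro i hi ω; simp [he, hi, hY]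
    have hinlT : ∀ k ∈ I, Sum.inl k ∈ T := fun k hk =>
      Finset.mem_union_left _ (Finset.mem_image_of_mem _ hk)
    have hinrT : ∀ k ∈ J, Sum.inr k ∈ T := fun k hk =>
      Finset.mem_union_right _ (Finset.mem_image_of_mem _ hk)
    -- functions reconstructing η from Y
    set g : ((i : T) → AddCircle (2 * Real.pi)) → AddCircle (2 * Real.pi) :=
      fun y => e (Sum.inl (a - 1)) y + e (Sum.inr a) y - e (Sum.inr (a - 1)) y with hg
    have hgmeas : Measurable g :=
      ((hemeas _).add (hemeas _)).sub (hemeas _)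
    set h : ℤ → ((i : T) → AddCircle (2 * Real.pi)) → AddCircle (2 * Real.pi) :=
      fun k y => e (Sum.inl k) y + e (Sum.inl (k - 1)) y + e (Sum.inr k) y - e (Sum.inr (k - 1)) y
      with hh
    have hhmeas : ∀ k, Measurable (h k) := fun k =>
      (((hemeas _).add (hemeas _)).add (hemeas _)).sub (hemeas _)
    -- key identities
    have hga : ∀ ω, θ a ω + g (Y ω) = θ a ω + θ (a - 1) ω + α a ω - α (a - 1) ω := by
      intro ω
      simp only [hg]
      rw [heY _ (hinlT _ ha1I), heY _ (hinrT _ haJ), heY _ (hinrT _ (hIJ _ ha1I))]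
      show θ a ω + (θ (a - 1) ω + α a ω - α (a - 1) ω) = _
      abel
    have hhk : ∀ k ∈ s, ∀ ω, h k (Y ω) = θ k ω + θ (k - 1) ω + α k ω - α (k - 1) ω := by
      intro k hk ω
      simp only [hh]
      rw [heY _ (hinlT _ (hmemI _ hk)), heY _ (hinlT _ (hmemI' _ hk)),
        heY _ (hinrT _ (hIJ _ (hmemI _ hk))), heY _ (hinrT _ (hIJ _ (hmemI' _ hk)))]
      rfl
    -- independence of θ a and Y
    have hXY : IndepFun (θ a) Y ℙ := by
      have h1 := hindep.indepFun_finset {Sum.inl a} T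
        (Finset.disjoint_singleton_left.mpr haT) hFmeas
      have h2 := h1.comp (measurable_pi_apply
        (⟨Sum.inl a, Finset.mem_singleton_self _⟩ : ({Sum.inl a} : Finset (ℤ ⊕ ℤ)))) measurable_id
      exact h2
    -- the set B
    set B : Set ((i : T) → AddCircle (2 * Real.pi)) := ⋂ k ∈ s, h k ⁻¹' E k with hB
    have hBmeas : MeasurableSet B :=
      MeasurableSet.biInter (Set.to_countable _)
        (fun k hk => (hhmeas k) (hE k (Finset.mem_insert_of_mem hk)))
    have hYB : Y ⁻¹' B = ⋂ k ∈ s, (fun ω => θ k ω + θ (k - 1) ω + α k ω - α (k - 1) ω) ⁻¹' E k := by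
      ext ω
      simp only [Set.mem_preimage, hB, Set.mem_iInter]
      constructor
      · intro hy k hk; have := hy k hk; rwa [hhk k hk ω] at this
      · intro hy k hk; rw [hhk k hk ω]; exact hy k hk
    have hmain : (⋂ k ∈ insert a s,
        (fun ω => θ k ω + θ (k - 1) ω + α k ω - α (k - 1) ω) ⁻¹' E k)
        = {ω | θ a ω + g (Y ω) ∈ E a ∧ Y ω ∈ B} := by
      ext ω
      simp only [Set.mem_iInter, Finset.mem_insert, Set.mem_setOf_eq, Set.mem_preimage, hB,
        Set.mem_iInter]
      constructor
      · intro hy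
        refine ⟨?_, ?_⟩
        · rw [hga ω]; exact hy a (Or.inl rfl)
        · intro k hk; rw [hhk k hk ω]; exact hy k (Or.inr hk)
      · rintro ⟨h1, h2⟩ k hk
        rcases hk with rfl | hk
        · rwa [← hga ω]
        · have := h2 k hk; rwa [hhk k hk ω] at this
    rw [hmain, key_cond (hθmeas a) hYmeas (hθunif a) hXY hgmeas
      (hE a (Finset.mem_insert_self a s)) hBmeas, hYB,
      ih E (fun k hk => hE k (Finset.mem_insert_of_mem hk)), Finset.prod_insert has]

/-- If `(θ_k)_{k∈ℤ}` and `(α_k)_{k∈ℤ}` are random variables with values in the circle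
`𝕋 = ℝ/2πℤ` such that the combined family is mutually independent, the `θ_k` are uniformly
distributed on `𝕋` and the `α_k` are identically distributed, then the random variables
`η_k = θ_k + θ_{k-1} + α_k − α_{k-1}` form an independent family, each uniformly
distributed on `𝕋`. -/
theorem eta_iid_uniform {Ω : Type*} [MeasureSpace Ω] [IsProbabilityMeasure (ℙ : Measure Ω)]
    (θ α : ℤ → Ω → AddCircle (2 * Real.pi))
    (hθmeas : ∀ k, Measurable (θ k)) (hαmeas : ∀ k, Measurable (α k))
    (hindep : iIndepFun (Sum.elim θ α) ℙ)
    (hθunif : ∀ k, Measure.map (θ k) ℙ = uniformCircle)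
    (hαid : ∀ k, Measure.map (α k) ℙ = Measure.map (α 0) ℙ) :
    iIndepFun
      (fun k ω => θ k ω + θ (k - 1) ω + α k ω - α (k - 1) ω) ℙ ∧
    ∀ k, Measure.map (fun ω => θ k ω + θ (k - 1) ω + α k ω - α (k - 1) ω) ℙ
      = uniformCircle := by
  have hηmeas : ∀ k, Measurable (fun ω => θ k ω + θ (k - 1) ω + α k ω - α (k - 1) ω) :=
    fun k => (((hθmeas k).add (hθmeas (k - 1))).add (hαmeas k)).sub (hαmeas (k - 1))
  have hsingle : ∀ (k : ℤ) (A : Set (AddCircle (2 * Real.pi))), MeasurableSet A →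
      ℙ ((fun ω => θ k ω + θ (k - 1) ω + α k ω - α (k - 1) ω) ⁻¹' A) = uniformCircle A := by
    intro k A hA
    have := eta_finset_measure θ α hθmeas hαmeas hindep hθunif {k}
      (fun _ => A) (fun _ _ => hA)
    simpa using this
  constructor
  · rw [iIndepFun_iff_measure_inter_preimage_eq_mul]
    intro S sets H
    rw [eta_finset_measure θ α hθmeas hαmeas hindep hθunif S sets H]
    exact Finset.prod_congr rfl fun k hk => (hsingle k (sets k) (H k hk)).symm
  · intro k
    ext A hA
    rw [Measure.map_apply (hηmeas k) hA, hsingle k A hA]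
end

section
/- For every real number y with y > 1, one has (1/(2π))·∫_{−1}^{1} ln((x−y)²)/√(1−x²) dx + ln 2 = ln(y + √(y²−1)). -/
open MeasureTheory Real Set

lemma aux_cont (a : ℝ) (ha : 1 < a) :
    Continuous fun θ : ℝ => Complex.log (↑a - Complex.exp (θ * Complex.I)) := by
  have hslit : ∀ θ : ℝ, (↑a - Complex.exp (θ * Complex.I)) ∈ Complex.slitPlane := by
    intro θ
    rw [Complex.mem_slitPlane_iff]
    left
    have : (Complex.exp (θ * Complex.I)).re = Real.cos θ := by
      simpa using Complex.exp_ofReal_mul_I_re θ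
    simp only [Complex.sub_re, Complex.ofReal_re, this]
    nlinarith [Real.cos_le_one θ]
  have hc : Continuous fun θ : ℝ => (↑a - Complex.exp (θ * Complex.I)) := by
    exact continuous_const.sub (Complex.continuous_exp.comp
      (Complex.continuous_ofReal.mul continuous_const))
  refine continuous_iff_continuousAt.2 fun θ => ?_
  exact ContinuousAt.comp (x := θ) (g := Complex.log) (continuousAt_clog (hslit θ)) hc.continuousAt

lemma aux_complex (a : ℝ) (ha : 1 < a) :
    (∫ θ in (0:ℝ)..(2*π), Complex.log (↑a - Complex.exp (θ * Complex.I)))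
      = 2 * π * Real.log a := by
  have ha0 : (0:ℝ) < a := lt_trans one_pos ha
  have hd : DifferentiableOn ℂ (fun z => Complex.log (↑a - z)) (Metric.closedBall 0 1) := by
    intro z hz
    apply DifferentiableAt.differentiableWithinAt
    have hs : (↑a - z) ∈ Complex.slitPlane := by
      rw [Complex.mem_slitPlane_iff]
      left
      simp only [Complex.sub_re, Complex.ofReal_re]
      have h1 : ‖z‖ ≤ 1 := by simpa [Metric.mem_closedBall] using hz
      have h2 : z.re ≤ 1 := le_trans (le_trans (le_abs_self _) (Complex.abs_re_le_norm z)) h1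
      linarith
    exact (Complex.differentiableAt_log hs).comp z
      ((differentiableAt_const _).sub differentiableAt_id)
  have hci := hd.circleIntegral_sub_inv_smul (w := 0) (by simp)
  rw [circleIntegral] at hci
  simp only [deriv_circleMap, sub_zero, smul_eq_mul] at hci
  have key : ∀ θ : ℝ, circleMap 0 1 θ * Complex.I * ((circleMap 0 1 θ)⁻¹ *
      Complex.log (↑a - circleMap 0 1 θ))
      = Complex.I * Complex.log (↑a - Complex.exp (θ * Complex.I)) := by
    intro θ
    have hne : circleMap 0 1 θ ≠ 0 := by simp [circleMap]
    have : circleMap 0 1 θ = Complex.exp (θ * Complex.I) := by simp [circleMap]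
    field_simp [this]
    rw [this, mul_comm (θ:ℂ) Complex.I]
  simp only [key] at hci
  rw [intervalIntegral.integral_const_mul] at hci
  have hI : (Complex.I : ℂ) ≠ 0 := Complex.I_ne_zero
  have h2 : Complex.I * (∫ x in (0:ℝ)..(2*π), Complex.log (↑a - Complex.exp (↑x * Complex.I)))
      = Complex.I * (2 * ↑π * Complex.log ↑a) := hci.trans (by ring)
  have h3 := mul_left_cancel₀ hI h2
  rw [h3, ← Complex.ofReal_log ha0.le]

lemma aux_real (a : ℝ) (ha : 1 < a) :
    (∫ θ in (0:ℝ)..(2*π), Real.log (‖(↑a - Complex.exp (θ * Complex.I))‖))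
      = 2 * π * Real.log a := by
  have hint : IntervalIntegrable (fun θ : ℝ => Complex.log (↑a - Complex.exp (θ * Complex.I)))
      volume 0 (2*π) := (aux_cont a ha).intervalIntegrable _ _
  have h := Complex.reCLM.intervalIntegral_comp_comm hint
  simp only [Complex.reCLM_apply, Complex.log_re] at h
  rw [h, aux_complex a ha]
  simp

lemma aux_pointwise (y : ℝ) (hy : 1 < y) (θ : ℝ) :
    Real.log ((Real.cos θ - y)^2)
      = 4 * Real.log (‖(↑(y + Real.sqrt (y^2-1)) - Complex.exp (θ * Complex.I))‖)
        - 2 * Real.log (2 * (y + Real.sqrt (y^2-1))) := by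
  set a : ℝ := y + Real.sqrt (y^2-1) with hadef
  have hs0 : 0 ≤ Real.sqrt (y^2-1) := Real.sqrt_nonneg _
  have hs : Real.sqrt (y^2-1)^2 = y^2-1 := Real.sq_sqrt (by nlinarith)
  have ha : 1 < a := by simp only [hadef]; nlinarith
  have ha0 : 0 < a := lt_trans one_pos ha
  have hquad : a^2 + 1 = 2*y*a := by simp only [hadef]; nlinarith
  set r : ℝ := ‖(↑a - Complex.exp (θ * Complex.I))‖ with hrdef
  have hre : (↑a - Complex.exp (θ * Complex.I)).re = a - Real.cos θ := by
    simp [Complex.exp_ofReal_mul_I_re]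
  have him : (↑a - Complex.exp (θ * Complex.I)).im = -Real.sin θ := by
    simp [Complex.exp_ofReal_mul_I_im]
  have hr2 : r^2 = 2*a*(y - Real.cos θ) := by
    rw [hrdef, Complex.sq_norm, Complex.normSq_apply, hre, him]
    nlinarith [Real.sin_sq_add_cos_sq θ]
  have hyc : 0 < y - Real.cos θ := by nlinarith [Real.cos_le_one θ]
  have hr0 : 0 < r := by nlinarith [norm_nonneg (↑a - Complex.exp (θ * Complex.I))]
  have heq : (Real.cos θ - y)^2 = r^4 / (2*a)^2 := by
    have h4 : r^4 = (2*a*(y - Real.cos θ))^2 := by rw [← hr2]; ring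
    field_simp
    nlinarith [h4]
  rw [heq, Real.log_div (by positivity) (by positivity), Real.log_pow, Real.log_pow]
  push_cast
  ring

lemma aux_double (y : ℝ) (hy : 1 < y) :
    (∫ θ in (0:ℝ)..(2*π), Real.log ((Real.cos θ - y)^2))
      = 2 * ∫ θ in (0:ℝ)..π, Real.log ((Real.cos θ - y)^2) := by
  have hcont : Continuous fun θ : ℝ => Real.log ((Real.cos θ - y)^2) :=
    ((Real.continuous_cos.sub continuous_const).pow 2).log
      (fun θ => pow_ne_zero _ (by show Real.cos θ - y ≠ 0; nlinarith [Real.cos_le_one θ]))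
  have hper : Function.Periodic (fun θ : ℝ => Real.log ((Real.cos θ - y)^2)) (2*π) :=
    fun θ => by simp [Real.cos_add_two_pi]
  have h1 := hper.intervalIntegral_add_eq 0 (-π)
  have e1 : (0:ℝ) + 2*π = 2*π := by ring
  have e2 : -π + 2*π = π := by ring
  rw [e1, e2] at h1
  have h2 : (∫ θ in (-π)..(0:ℝ), Real.log ((Real.cos θ - y)^2))
      = ∫ θ in (0:ℝ)..π, Real.log ((Real.cos θ - y)^2) := by
    have h := intervalIntegral.integral_comp_neg (a := (0:ℝ)) (b := π)
      (f := fun θ : ℝ => Real.log ((Real.cos θ - y)^2))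
    simpa [Real.cos_neg] using h.symm
  have h3 := intervalIntegral.integral_add_adjacent_intervals
    (a := -π) (b := 0) (c := π) (μ := volume)
    (f := fun θ : ℝ => Real.log ((Real.cos θ - y)^2))
    (hcont.intervalIntegrable _ _) (hcont.intervalIntegrable _ _)
  rw [h1, ← h3, h2]
  ring

lemma aux_subst (y : ℝ) (hy : 1 < y) :
    (∫ x in Set.Ioo (-1:ℝ) 1, Real.log ((x - y)^2) / Real.sqrt (1 - x^2))
      = ∫ θ in Set.Ioo (0:ℝ) π, Real.log ((Real.cos θ - y)^2) := by
  have himg : Real.cos '' Set.Ioo 0 π = Set.Ioo (-1:ℝ) 1 := by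
    ext x
    constructor
    · rintro ⟨θ, ⟨h0, hπ⟩, rfl⟩
      have hm0 : (0:ℝ) ∈ Set.Icc 0 π := Set.left_mem_Icc.2 Real.pi_pos.le
      have hmπ : π ∈ Set.Icc (0:ℝ) π := Set.right_mem_Icc.2 Real.pi_pos.le
      have hmθ : θ ∈ Set.Icc (0:ℝ) π := ⟨h0.le, hπ.le⟩
      constructor
      · have := Real.strictAntiOn_cos hmθ hmπ hπ
        simpa [Real.cos_pi] using this
      · have := Real.strictAntiOn_cos hm0 hmθ h0
        simpa [Real.cos_zero] using this
    · intro hx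
      exact ⟨Real.arccos x, ⟨Real.arccos_pos.2 hx.2, by
        have h1 := Real.neg_pi_div_two_lt_arcsin.2 hx.1
        rw [Real.arccos]; linarith⟩,
        Real.cos_arccos hx.1.le hx.2.le⟩
  rw [← himg, integral_image_eq_integral_abs_deriv_smul measurableSet_Ioo
    (fun θ _ => (Real.hasDerivAt_cos θ).hasDerivWithinAt)
    (Real.injOn_cos.mono Set.Ioo_subset_Icc_self)]
  apply setIntegral_congr_fun measurableSet_Ioo
  intro θ hθ
  obtain ⟨h0, hπ⟩ := hθ
  have hs : 0 < Real.sin θ := Real.sin_pos_of_pos_of_lt_pi h0 hπ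
  have h1 : Real.sqrt (1 - Real.cos θ^2) = Real.sin θ := by
    rw [← Real.sin_sq θ, Real.sqrt_sq hs.le]
  simp only [smul_eq_mul, abs_neg, abs_of_pos hs, h1]
  field_simp

/-- For every real `y > 1`,
`(1/(2π)) ∫_{−1}^{1} ln((x−y)²)/√(1−x²) dx + ln 2 = ln(y + √(y²−1))`. -/
theorem log_integral_eq_log_sqrt (y : ℝ) (hy : 1 < y) :
    (1 / (2 * Real.pi)) *
        (∫ x in Set.Ioo (-1 : ℝ) 1, Real.log ((x - y) ^ 2) / Real.sqrt (1 - x ^ 2))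
      + Real.log 2 = Real.log (y + Real.sqrt (y ^ 2 - 1)) := by
  set a : ℝ := y + Real.sqrt (y^2-1) with hadef
  have hs0 : 0 ≤ Real.sqrt (y^2-1) := Real.sqrt_nonneg _
  have ha : 1 < a := by simp only [hadef]; nlinarith
  have ha0 : 0 < a := lt_trans one_pos ha
  -- continuity of θ ↦ log |a - e^{iθ}|
  have hca : Continuous fun θ : ℝ => Real.log (‖(↑a - Complex.exp (θ * Complex.I))‖) := by
    have h := Complex.continuous_re.comp (aux_cont a ha)
    simp only [Function.comp_def, Complex.log_re] at h
    exact h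
  -- the 0..2π integral
  have hptw : (∫ θ in (0:ℝ)..(2*π), Real.log ((Real.cos θ - y)^2))
      = ∫ θ in (0:ℝ)..(2*π),
          (4 * Real.log (‖(↑a - Complex.exp (θ * Complex.I))‖)
            - 2 * Real.log (2*a)) :=
    intervalIntegral.integral_congr fun θ _ => aux_pointwise y hy θ
  have hJ : (∫ θ in (0:ℝ)..(2*π), Real.log ((Real.cos θ - y)^2))
      = 8 * π * Real.log a - 4 * π * Real.log (2*a) := by
    rw [hptw, intervalIntegral.integral_sub
      (f := fun θ : ℝ => 4 * Real.log (‖(↑a - Complex.exp (θ * Complex.I))‖))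
      (((continuous_const.mul hca)).intervalIntegrable _ _)
      (intervalIntegrable_const),
      intervalIntegral.integral_const_mul, aux_real a ha,
      intervalIntegral.integral_const]
    simp only [smul_eq_mul]
    ring
  -- the 0..π integral
  have hI : (∫ θ in (0:ℝ)..π, Real.log ((Real.cos θ - y)^2))
      = 4 * π * Real.log a - 2 * π * Real.log (2*a) := by
    have := aux_double y hy
    rw [hJ] at this
    linarith
  -- from Ioo to interval integral
  have hIoo : (∫ θ in Set.Ioo (0:ℝ) π, Real.log ((Real.cos θ - y)^2))
      = ∫ θ in (0:ℝ)..π, Real.log ((Real.cos θ - y)^2) := by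
    rw [intervalIntegral.integral_of_le Real.pi_pos.le,
      MeasureTheory.integral_Ioc_eq_integral_Ioo]
  rw [aux_subst y hy, hIoo, hI, Real.log_mul two_ne_zero ha0.ne']
  have hπ : Real.pi ≠ 0 := Real.pi_ne_zero
  field_simp
  ring
end

section
/- Let r, t ∈ (0,1) with r² + t² = 1 and let β ∈ [−arccos(r² − t²), 0]. Then the Lebesgue measure of the set {λ ∈ (−π, π] : arccos(r² − t²·cos(2λ)) > −β} equals 2·arccos((r² − cos β)/t²). In particular the integrated density of states of the free operator satisfies N₀(β) = (1/(2π))·arccos((r² − cos β)/t²) on this interval. -/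
open MeasureTheory Real

/-- For `β ∈ [−arccos(r²−t²), 0]`, the Lebesgue measure of
`{λ ∈ (−π, π] : arccos(r² − t²cos 2λ) > −β}` equals `2·arccos((r² − cos β)/t²)`; in
particular the free integrated density of states `N₀(β)`, defined as `(1/4π)` times this
measure, equals `(1/(2π))·arccos((r² − cos β)/t²)`. -/
theorem free_ids_formula (r t : ℝ) (hr : r ∈ Set.Ioo (0 : ℝ) 1)
    (ht : t ∈ Set.Ioo (0 : ℝ) 1) (hrt : r ^ 2 + t ^ 2 = 1) (β : ℝ)
    (hβ : β ∈ Set.Icc (-Real.arccos (r ^ 2 - t ^ 2)) 0) :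
    volume {l : ℝ | l ∈ Set.Ioc (-Real.pi) Real.pi ∧
        Real.arccos (r ^ 2 - t ^ 2 * Real.cos (2 * l)) > -β}
      = ENNReal.ofReal (2 * Real.arccos ((r ^ 2 - Real.cos β) / t ^ 2)) ∧
    (volume {l : ℝ | l ∈ Set.Ioc (-Real.pi) Real.pi ∧
        Real.arccos (r ^ 2 - t ^ 2 * Real.cos (2 * l)) > -β}).toReal / (4 * Real.pi)
      = (1 / (2 * Real.pi)) * Real.arccos ((r ^ 2 - Real.cos β) / t ^ 2) := by
  obtain ⟨hr0, hr1⟩ := hr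
  obtain ⟨ht0, ht1⟩ := ht
  obtain ⟨hβ1, hβ2⟩ := hβ
  have ht2 : (0:ℝ) < t ^ 2 := by positivity
  have hrt1 : (-1:ℝ) ≤ r^2 - t^2 := by nlinarith
  have hrt2 : r^2 - t^2 ≤ 1 := by nlinarith
  have hpi := Real.pi_pos
  set c : ℝ := (r ^ 2 - Real.cos β) / t ^ 2 with hc
  set a : ℝ := Real.arccos c with ha
  have hβpi : -β ≤ Real.pi := by
    have := Real.arccos_le_pi (r^2 - t^2); linarith
  have hcosβ : r^2 - t^2 ≤ Real.cos β := by
    have h1 : Real.cos β = Real.cos (-β) := (Real.cos_neg β).symm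
    rw [h1]
    calc r^2 - t^2 = Real.cos (Real.arccos (r^2 - t^2)) :=
          (Real.cos_arccos hrt1 hrt2).symm
      _ ≤ Real.cos (-β) :=
          Real.cos_le_cos_of_nonneg_of_le_pi (by linarith) (Real.arccos_le_pi _)
            (by linarith)
  have hc1 : c ≤ 1 := by rw [hc, div_le_one ht2]; linarith
  have hc2 : (-1:ℝ) ≤ c := by
    rw [hc, le_div_iff₀ ht2]; nlinarith [Real.cos_le_one β]
  have hcosa : Real.cos a = c := Real.cos_arccos hc2 hc1
  have ha0 : 0 ≤ a := Real.arccos_nonneg c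
  have hapi : a ≤ Real.pi := Real.arccos_le_pi c
  -- key lemma: cos y = cos (2l) > c forces y < a
  have hkey : ∀ y : ℝ, 0 ≤ y → y ≤ Real.pi → c < Real.cos y → y < a := by
    intro y hy0 hyπ hyc
    by_contra h
    push_neg at h
    have := Real.cos_le_cos_of_nonneg_of_le_pi ha0 hyπ h
    rw [hcosa] at this; linarith
  -- equivalence of the defining condition with cos (2l) > c
  have hmain : ∀ l : ℝ,
      (Real.arccos (r^2 - t^2 * Real.cos (2*l)) > -β ↔ c < Real.cos (2*l)) := by
    intro l
    have hcl1 : -1 ≤ Real.cos (2*l) := Real.neg_one_le_cos _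
    have hcl2 : Real.cos (2*l) ≤ 1 := Real.cos_le_one _
    have hx1 : (-1:ℝ) ≤ r^2 - t^2 * Real.cos (2*l) := by nlinarith
    have hx2 : r^2 - t^2 * Real.cos (2*l) ≤ 1 := by nlinarith
    constructor
    · intro h
      have h2 := Real.cos_lt_cos_of_nonneg_of_le_pi (by linarith : (0:ℝ) ≤ -β)
        (Real.arccos_le_pi _) h
      rw [Real.cos_arccos hx1 hx2, Real.cos_neg] at h2
      rw [hc, div_lt_iff₀ ht2]; nlinarith
    · intro h
      rw [hc, div_lt_iff₀ ht2] at h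
      by_contra hcon
      push_neg at hcon
      have h2 := Real.cos_le_cos_of_nonneg_of_le_pi (Real.arccos_nonneg _) hβpi hcon
      rw [Real.cos_arccos hx1 hx2, Real.cos_neg] at h2
      nlinarith
  -- the set as a union of intervals
  set A : Set ℝ := Set.Ioo (-(a/2)) (a/2) with hA
  set B : Set ℝ := Set.Ioc (Real.pi - a/2) Real.pi with hB
  set C : Set ℝ := Set.Ioo (-Real.pi) (-Real.pi + a/2) with hC
  have hset : {l : ℝ | l ∈ Set.Ioc (-Real.pi) Real.pi ∧
      Real.arccos (r ^ 2 - t ^ 2 * Real.cos (2 * l)) > -β} = A ∪ B ∪ C := by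
    ext l
    simp only [Set.mem_setOf_eq, Set.mem_union, Set.mem_Ioo, Set.mem_Ioc, hA, hB, hC,
      hmain l]
    constructor
    · rintro ⟨⟨hl1, hl2⟩, hgt⟩
      rcases le_or_gt l (-(Real.pi/2)) with h | h
      · rcases eq_or_lt_of_le h with h' | h'
        · exfalso
          rw [h'] at hgt
          have : Real.cos (2 * -(Real.pi/2)) = -1 := by
            rw [show 2 * -(Real.pi/2) = -Real.pi by ring, Real.cos_neg, Real.cos_pi]
          rw [this] at hgt; linarith
        · right
          have hy := hkey (2*l + 2*Real.pi) (by linarith) (by linarith)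
            (by rwa [Real.cos_add_two_pi])
          exact ⟨hl1, by linarith⟩
      rcases le_or_gt l (Real.pi/2) with h2 | h2
      · left; left
        have hy := hkey |2*l| (abs_nonneg _) (by rw [abs_le]; constructor <;> linarith)
          (by rwa [Real.cos_abs])
        rw [abs_lt] at hy
        exact ⟨by linarith [hy.1], by linarith [hy.2]⟩
      · left; right
        have hy := hkey (2*Real.pi - 2*l) (by linarith) (by linarith)
          (by rwa [Real.cos_two_pi_sub])
        exact ⟨by linarith, hl2⟩
    · rintro ((⟨h1, h2⟩ | ⟨h1, h2⟩) | ⟨h1, h2⟩)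
      · refine ⟨⟨by linarith, by linarith⟩, ?_⟩
        have := Real.cos_lt_cos_of_nonneg_of_le_pi (abs_nonneg (2*l)) hapi
          (by rw [abs_lt]; constructor <;> linarith)
        rw [Real.cos_abs, hcosa] at this; exact this
      · refine ⟨⟨by linarith, h2⟩, ?_⟩
        have := Real.cos_lt_cos_of_nonneg_of_le_pi
          (by linarith : (0:ℝ) ≤ 2*Real.pi - 2*l) hapi (by linarith)
        rw [Real.cos_two_pi_sub, hcosa] at this; exact this
      · refine ⟨⟨h1, by linarith⟩, ?_⟩
        have := Real.cos_lt_cos_of_nonneg_of_le_pi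
          (by linarith : (0:ℝ) ≤ 2*l + 2*Real.pi) hapi (by linarith)
        rw [Real.cos_add_two_pi, hcosa] at this; exact this
  have hdAB : Disjoint A B := by
    rw [Set.disjoint_left]
    rintro x ⟨_, h2⟩ ⟨h3, _⟩
    linarith
  have hdABC : Disjoint (A ∪ B) C := by
    rw [Set.disjoint_left]
    rintro x (⟨h1, _⟩ | ⟨h1, _⟩) ⟨_, h4⟩ <;> linarith
  have hvol : volume (A ∪ B ∪ C) = ENNReal.ofReal (2 * a) := by
    rw [measure_union hdABC measurableSet_Ioo,
      measure_union hdAB (measurableSet_Ioc), hA, hB, hC,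
      Real.volume_Ioo, Real.volume_Ioc, Real.volume_Ioo,
      ← ENNReal.ofReal_add (by linarith) (by linarith),
      ← ENNReal.ofReal_add (by linarith) (by linarith)]
    congr 1; ring
  have h1 : volume {l : ℝ | l ∈ Set.Ioc (-Real.pi) Real.pi ∧
      Real.arccos (r ^ 2 - t ^ 2 * Real.cos (2 * l)) > -β}
      = ENNReal.ofReal (2 * a) := by rw [hset]; exact hvol
  refine ⟨h1, ?_⟩
  rw [h1, ENNReal.toReal_ofReal (by linarith)]
  field_simp
  ring
end

section
/- For n ≥ 1 and j ∈ ℤ, let C_{n−1}(j) be the set of paths (k₀, k₁, …, k_n) ∈ ℤ^{n+1} with k₀ = 0, k_n = j, and for each m ∈ {0, …, n−1}: k_{m+1} − k_m ∈ {0, 1, −1, 2} if k_m is odd, and k_{m+1} − k_m ∈ {0, 1, −1, −2} if k_m is even. Then C_{n−1}(j) is finite and its cardinality equals the binomial coefficient C(2n−1, j/2 + n) if j is even with −2n ≤ j ≤ 2(n−1), and equals C(2n−1, (j−1)/2 + n) if j is odd with −2n+1 ≤ j ≤ 2n−1. -/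
/-- The set of admissible paths `(k₀ = 0, k₁, …, k_n = j)` in `ℤ`: from an odd site the
allowed steps are `{0, 1, −1, 2}`, from an even site they are `{0, 1, −1, −2}`. -/
def pathsC (n : ℕ) (j : ℤ) : Set (Fin (n + 1) → ℤ) :=
  {p | p 0 = 0 ∧ p (Fin.last n) = j ∧ ∀ m : Fin n,
    (Odd (p m.castSucc) → p m.succ - p m.castSucc ∈ ({0, 1, -1, 2} : Set ℤ)) ∧
    (Even (p m.castSucc) → p m.succ - p m.castSucc ∈ ({0, 1, -1, -2} : Set ℤ))}


/-- The step taken from position `k`, encoded by two bits `u` (size bit) and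
`e` (parity bit of the next position). -/
def stp (k : ℤ) (u e : Bool) : ℤ :=
  (if k % 2 = 0 then (if u then 0 else -2) else (if u then 1 else -1)) +
    (if e then 1 else 0)

/-- The path determined by a bit sequence: step `m` uses bits `b (2m)` and `b (2m+1)`. -/
def pos (b : ℕ → Bool) : ℕ → ℤ
  | 0 => 0
  | m + 1 => pos b m + stp (pos b m) (b (2 * m)) (b (2 * m + 1))

lemma pos_parity (b : ℕ → Bool) (m : ℕ) :
    pos b (m + 1) % 2 = (if b (2 * m + 1) then 1 else 0) := by
  rcases Int.emod_two_eq (pos b m) with h | h <;>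
    cases hu : b (2 * m) <;> cases he : b (2 * m + 1) <;>
      simp [pos, stp, h, hu, he] <;> omega

lemma bit_u (b : ℕ → Bool) (m : ℕ) :
    b (2 * m) = decide (pos b m % 2 ≤ pos b (m + 1) - pos b m) := by
  rcases Int.emod_two_eq (pos b m) with h | h <;>
    cases hu : b (2 * m) <;> cases he : b (2 * m + 1) <;>
      simp [pos, stp, h, hu, he] <;> omega

lemma bit_e (b : ℕ → Bool) (m : ℕ) :
    b (2 * m + 1) = decide (pos b (m + 1) % 2 = 1) := by
  have h := pos_parity b m
  cases he : b (2 * m + 1) <;> simp [he] at h <;> simp [h]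

/-- Parity of the path at time `m`, as `0` or `1`. -/
def Eb (b : ℕ → Bool) : ℕ → ℤ
  | 0 => 0
  | m + 1 => if b (2 * m + 1) then 1 else 0

lemma pos_emod (b : ℕ → Bool) (m : ℕ) : pos b m % 2 = Eb b m := by
  cases m with
  | zero => rfl
  | succ m => rw [pos_parity]; rfl

lemma pos_eq (b : ℕ → Bool) (m : ℕ) :
    pos b m =
      2 * ((∑ i ∈ Finset.range m, ((if b (2 * i) then 1 else 0) + Eb b i)) - m) + Eb b m := by
  induction m with
  | zero => simp [pos, Eb]
  | succ m ih =>
    rw [Finset.sum_range_succ]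
    have hp := pos_emod b m
    have hq := pos_emod b (m + 1)
    cases hu : b (2 * m) <;> cases he : b (2 * m + 1) <;>
      rcases Int.emod_two_eq (pos b m) with h | h <;>
        simp [pos, stp, Eb, hu, he, h] at * <;> omega

lemma sum_split (b : ℕ → Bool) (n : ℕ) :
    (∑ i ∈ Finset.range (n + 1), (if b (2 * i) then (1 : ℤ) else 0)) +
      ∑ i ∈ Finset.range n, (if b (2 * i + 1) then (1 : ℤ) else 0) =
      ∑ i ∈ Finset.range (2 * n + 1), (if b i then (1 : ℤ) else 0) := by
  induction n with
  | zero => simp only [zero_add, Finset.sum_range_one, Finset.sum_range_zero, add_zero, Nat.mul_zero]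
  | succ n ih =>
    rw [Finset.sum_range_succ (fun i => if b (2 * i) then (1 : ℤ) else 0) (n + 1),
      Finset.sum_range_succ (fun i => if b (2 * i + 1) then (1 : ℤ) else 0) n,
      show 2 * (n + 1) + 1 = (2 * n + 1) + 1 + 1 from by ring,
      Finset.sum_range_succ (fun i => if b i then (1 : ℤ) else 0) ((2 * n + 1) + 1),
      Finset.sum_range_succ (fun i => if b i then (1 : ℤ) else 0) (2 * n + 1), ← ih,
      show 2 * (n + 1) = 2 * n + 1 + 1 from by ring]
    ring

lemma sum_full (b : ℕ → Bool) (n : ℕ) (hn : 1 ≤ n) :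
    (∑ i ∈ Finset.range n, ((if b (2 * i) then (1 : ℤ) else 0) + Eb b i)) =
      ∑ i ∈ Finset.range (2 * n - 1), (if b i then (1 : ℤ) else 0) := by
  obtain ⟨k, rfl⟩ := Nat.exists_eq_add_of_le hn
  rw [Finset.sum_add_distrib]
  have hE : (∑ i ∈ Finset.range (1 + k), Eb b i) =
      ∑ i ∈ Finset.range k, (if b (2 * i + 1) then (1 : ℤ) else 0) := by
    rw [show 1 + k = k + 1 from by ring, Finset.sum_range_succ']
    simp [Eb]
  rw [hE, show 1 + k = k + 1 from by ring, show 2 * (k + 1) - 1 = 2 * k + 1 from by omega]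
  exact sum_split b k

/-- Decoding a subset of `Fin (2n-1)` into a bit sequence; the bit `2n-1` (the final
parity) is fixed to the parity of `j`. -/
def db (n : ℕ) (j : ℤ) (s : Finset (Fin (2 * n - 1))) : ℕ → Bool :=
  fun i => if h : i < 2 * n - 1 then decide ((⟨i, h⟩ : Fin (2 * n - 1)) ∈ s)
    else decide (j % 2 = 1)

lemma sum_db (n : ℕ) (j : ℤ) (s : Finset (Fin (2 * n - 1))) :
    (∑ i ∈ Finset.range (2 * n - 1), (if db n j s i then (1 : ℤ) else 0)) = s.card := by
  rw [Finset.sum_range fun i => if db n j s i then (1 : ℤ) else 0]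
  have h : ∀ x : Fin (2 * n - 1), (if db n j s x then (1 : ℤ) else 0) =
      if x ∈ s then (1 : ℤ) else 0 := by
    intro x
    simp [db, x.isLt]
  rw [Finset.sum_congr rfl fun x _ => h x]
  simp [Finset.sum_ite_mem]

lemma pos_db_last (n : ℕ) (hn : 1 ≤ n) (j : ℤ) (s : Finset (Fin (2 * n - 1))) :
    pos (db n j s) n = 2 * ((s.card : ℤ) - n) + j % 2 := by
  rw [pos_eq, sum_full _ _ hn, sum_db]
  have hE : Eb (db n j s) n = j % 2 := by
    obtain ⟨k, rfl⟩ := Nat.exists_eq_add_of_le hn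
    have h1 : ¬ (2 * k + 1 < 2 * (1 + k) - 1) := by omega
    simp only [show 1 + k = k + 1 from by ring, Eb, db,
      show 2 * (k + 1) - 1 = 2 * k + 1 from by omega, dif_neg (by omega : ¬ (2 * k + 1 < 2 * k + 1))]
    rcases Int.emod_two_eq j with h | h <;> simp [h]
  rw [hE]

lemma stp_mem_odd (k : ℤ) (u e : Bool) (h : k % 2 = 1) :
    stp k u e ∈ ({0, 1, -1, 2} : Set ℤ) := by
  cases u <;> cases e <;> simp [stp, h]

lemma stp_mem_even (k : ℤ) (u e : Bool) (h : k % 2 = 0) :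
    stp k u e ∈ ({0, 1, -1, -2} : Set ℤ) := by
  cases u <;> cases e <;> simp [stp, h]

lemma decode_mem (n : ℕ) (hn : 1 ≤ n) (j : ℤ) (s : Finset (Fin (2 * n - 1)))
    (hcard : 2 * ((s.card : ℤ) - n) + j % 2 = j) :
    (fun m : Fin (n + 1) => pos (db n j s) m) ∈ pathsC n j := by
  refine ⟨?_, ?_, ?_⟩
  · show pos (db n j s) ((0 : Fin (n + 1)) : ℕ) = 0
    simp [pos]
  · show pos (db n j s) ((Fin.last n : Fin (n + 1)) : ℕ) = j
    rw [Fin.val_last, pos_db_last n hn j s, hcard]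
  · intro m
    have h1 : ((m.castSucc : Fin (n + 1)) : ℕ) = (m : ℕ) := rfl
    have h2 : ((m.succ : Fin (n + 1)) : ℕ) = (m : ℕ) + 1 := rfl
    simp only [h1, h2]
    constructor
    · intro ho
      have hk : pos (db n j s) (m : ℕ) % 2 = 1 := Int.odd_iff.mp ho
      have : pos (db n j s) ((m : ℕ) + 1) - pos (db n j s) (m : ℕ) =
          stp (pos (db n j s) (m : ℕ)) (db n j s (2 * m)) (db n j s (2 * m + 1)) := by
        rw [pos]; ring
      rw [this]
      exact stp_mem_odd _ _ _ hk
    · intro ho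
      have hk : pos (db n j s) (m : ℕ) % 2 = 0 := Int.even_iff.mp ho
      have : pos (db n j s) ((m : ℕ) + 1) - pos (db n j s) (m : ℕ) =
          stp (pos (db n j s) (m : ℕ)) (db n j s (2 * m)) (db n j s (2 * m + 1)) := by
        rw [pos]; ring
      rw [this]
      exact stp_mem_even _ _ _ hk

lemma decode_inj (n : ℕ) (hn : 1 ≤ n) (j : ℤ) :
    Function.Injective
      (fun s : Finset (Fin (2 * n - 1)) => (fun m : Fin (n + 1) => pos (db n j s) m)) := by
  intro s t h
  have hpos : ∀ m, m ≤ n → pos (db n j s) m = pos (db n j t) m := by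
    intro m hm
    exact congrFun h ⟨m, by omega⟩
  have hb : ∀ i, i < 2 * n - 1 → db n j s i = db n j t i := by
    intro i hi
    rcases Nat.even_or_odd i with ⟨m, hm⟩ | ⟨m, hm⟩
    · have hmn : m + 1 ≤ n := by omega
      have : i = 2 * m := by omega
      subst this
      rw [bit_u (db n j s) m, bit_u (db n j t) m, hpos m (by omega), hpos (m + 1) hmn]
    · have hmn : m + 1 ≤ n := by omega
      have : i = 2 * m + 1 := by omega
      subst this
      rw [bit_e (db n j s) m, bit_e (db n j t) m, hpos (m + 1) hmn]
  ext i
  have := hb i i.isLt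
  simpa [db, i.isLt] using this

lemma decode_surj (n : ℕ) (hn : 1 ≤ n) (j : ℤ) (p : Fin (n + 1) → ℤ)
    (hp : p ∈ pathsC n j) :
    ∃ s : Finset (Fin (2 * n - 1)), 2 * ((s.card : ℤ) - n) + j % 2 = j ∧
      (fun m : Fin (n + 1) => pos (db n j s) m) = p := by
  classical
  obtain ⟨hp0, hpl, hps⟩ := hp
  set q : ℕ → ℤ := fun m => p ⟨min m n, by omega⟩ with hq
  have hqe : ∀ m, ∀ hm : m ≤ n, q m = p ⟨m, Nat.lt_succ_of_le hm⟩ := by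
    intro m hm
    simp only [hq]
    congr 1
    exact Fin.ext (by simp [Nat.min_eq_left hm])
  have hq0 : q 0 = 0 := by
    rw [hqe 0 (by omega)]
    exact hp0
  have hqn : q n = j := by
    rw [hqe n le_rfl]
    exact hpl
  set s : Finset (Fin (2 * n - 1)) := Finset.univ.filter (fun i : Fin (2 * n - 1) =>
    if (i : ℕ) % 2 = 0 then q ((i : ℕ) / 2) % 2 ≤ q ((i : ℕ) / 2 + 1) - q ((i : ℕ) / 2)
    else q (((i : ℕ) + 1) / 2) % 2 = 1) with hs
  -- the decoded bits
  have hbu : ∀ m, m < n → db n j s (2 * m) =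
      decide (q m % 2 ≤ q (m + 1) - q m) := by
    intro m hm
    have h2 : 2 * m < 2 * n - 1 := by omega
    simp only [db, dif_pos h2, hs, Finset.mem_filter, Finset.mem_univ, true_and]
    congr 1
    have e0 : (2 * m) % 2 = 0 := by omega
    have e1 : (2 * m) / 2 = m := by omega
    simp [e0, e1]
  have hbe : ∀ m, m < n → db n j s (2 * m + 1) = decide (q (m + 1) % 2 = 1) := by
    intro m hm
    by_cases h2 : 2 * m + 1 < 2 * n - 1
    · simp only [db, dif_pos h2, hs, Finset.mem_filter, Finset.mem_univ, true_and]
      congr 1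
      have e0 : ¬ ((2 * m + 1) % 2 = 0) := by omega
      have e1 : (2 * m + 1 + 1) / 2 = m + 1 := by omega
      simp [e0, e1]
    · have hm1 : m + 1 = n := by omega
      simp only [db, dif_neg h2, hm1, hqn]
  -- main induction
  have hkey : ∀ m, m ≤ n → pos (db n j s) m = q m := by
    intro m
    induction m with
    | zero => intro _; simpa [pos] using hq0.symm
    | succ m ih =>
      intro hm
      have hmn : m < n := by omega
      have ihm := ih (by omega)
      rw [pos, ihm, hbu m hmn, hbe m hmn]
      have hstep := hps ⟨m, hmn⟩
      have hc : (Fin.castSucc ⟨m, hmn⟩ : Fin (n + 1)) = ⟨m, by omega⟩ := rfl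
      have hsc : (Fin.succ ⟨m, hmn⟩ : Fin (n + 1)) = ⟨m + 1, by omega⟩ := rfl
      rw [hc, hsc, ← hqe m (by omega), ← hqe (m + 1) hm] at hstep
      rcases Int.even_or_odd (q m) with he | he
      · have hk : q m % 2 = 0 := Int.even_iff.mp he
        have hd := hstep.2 he
        simp only [Set.mem_insert_iff, Set.mem_singleton_iff] at hd
        by_cases hP : q m % 2 ≤ q (m + 1) - q m <;>
          by_cases hQ : q (m + 1) % 2 = 1 <;>
            rcases hd with h | h | h | h <;>
              simp [stp, hP, hQ, hk] <;> omega
      · have hk : q m % 2 = 1 := Int.odd_iff.mp he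
        have hd := hstep.1 he
        simp only [Set.mem_insert_iff, Set.mem_singleton_iff] at hd
        by_cases hP : q m % 2 ≤ q (m + 1) - q m <;>
          by_cases hQ : q (m + 1) % 2 = 1 <;>
            rcases hd with h | h | h | h <;>
              simp [stp, hP, hQ, hk] <;> omega
  refine ⟨s, ?_, ?_⟩
  · have := pos_db_last n hn j s
    rw [hkey n le_rfl, hqn] at this
    omega
  · funext m
    show pos (db n j s) (m : ℕ) = p m
    have hm : (m : ℕ) ≤ n := Nat.lt_succ_iff.mp m.isLt
    rw [hkey (m : ℕ) hm, hqe (m : ℕ) hm]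

lemma card_set (k N : ℕ) :
    {s : Finset (Fin k) | s.card = N}.ncard = Nat.choose k N := by
  classical
  have h : {s : Finset (Fin k) | s.card = N} =
      ↑(Finset.powersetCard N (Finset.univ : Finset (Fin k))) := by
    ext s
    simp [Finset.mem_powersetCard, Finset.subset_univ]
  rw [h, Set.ncard_coe_finset, Finset.card_powersetCard, Finset.card_univ, Fintype.card_fin]

theorem pathsC_card' (n : ℕ) (hn : 1 ≤ n) (j : ℤ) :
    (pathsC n j).Finite ∧
    (Even j → -(2 * (n : ℤ)) ≤ j → j ≤ 2 * (n : ℤ) - 2 →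
      (pathsC n j).ncard = Nat.choose (2 * n - 1) (j / 2 + (n : ℤ)).toNat) ∧
    (Odd j → -(2 * (n : ℤ)) + 1 ≤ j → j ≤ 2 * (n : ℤ) - 1 →
      (pathsC n j).ncard = Nat.choose (2 * n - 1) ((j - 1) / 2 + (n : ℤ)).toNat) := by
  classical
  have himg : pathsC n j =
      (fun s : Finset (Fin (2 * n - 1)) => (fun m : Fin (n + 1) => pos (db n j s) m)) ''
        {s | 2 * ((s.card : ℤ) - n) + j % 2 = j} := by
    ext p
    constructor
    · intro hp
      obtain ⟨s, h1, h2⟩ := decode_surj n hn j p hp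
      exact ⟨s, h1, h2⟩
    · rintro ⟨s, hs, rfl⟩
      exact decode_mem n hn j s hs
  have hfin : (pathsC n j).Finite := by
    rw [himg]
    exact (Set.toFinite _).image _
  have hcard : (pathsC n j).ncard = {s : Finset (Fin (2 * n - 1)) |
      2 * ((s.card : ℤ) - n) + j % 2 = j}.ncard := by
    rw [himg]
    exact Set.ncard_image_of_injective _ (decode_inj n hn j)
  refine ⟨hfin, ?_, ?_⟩
  · intro hev h1 h2
    have he : j % 2 = 0 := Int.even_iff.mp hev
    have hset : {s : Finset (Fin (2 * n - 1)) | 2 * ((s.card : ℤ) - n) + j % 2 = j} =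
        {s : Finset (Fin (2 * n - 1)) | s.card = (j / 2 + (n : ℤ)).toNat} := by
      ext s
      simp only [Set.mem_setOf_eq]
      omega
    rw [hcard, hset, card_set]
  · intro hod h1 h2
    have he : j % 2 = 1 := Int.odd_iff.mp hod
    have hset : {s : Finset (Fin (2 * n - 1)) | 2 * ((s.card : ℤ) - n) + j % 2 = j} =
        {s : Finset (Fin (2 * n - 1)) | s.card = ((j - 1) / 2 + (n : ℤ)).toNat} := by
      ext s
      simp only [Set.mem_setOf_eq]
      omega
    rw [hcard, hset, card_set]

/-- The set `C_{n−1}(j)` of admissible paths of `n` steps from `0` to `j` is finite, and its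
cardinality is `C(2n−1, j/2 + n)` for even `j` with `−2n ≤ j ≤ 2(n−1)`, and
`C(2n−1, (j−1)/2 + n)` for odd `j` with `−2n+1 ≤ j ≤ 2n−1`. -/
theorem pathsC_card (n : ℕ) (hn : 1 ≤ n) (j : ℤ) :
    (pathsC n j).Finite ∧
    (Even j → -(2 * (n : ℤ)) ≤ j → j ≤ 2 * (n : ℤ) - 2 →
      (pathsC n j).ncard = Nat.choose (2 * n - 1) (j / 2 + (n : ℤ)).toNat) ∧
    (Odd j → -(2 * (n : ℤ)) + 1 ≤ j → j ≤ 2 * (n : ℤ) - 1 →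
      (pathsC n j).ncard = Nat.choose (2 * n - 1) ((j - 1) / 2 + (n : ℤ)).toNat) := by
  exact pathsC_card' n hn j
end
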